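/- For λ ∈ [−1,0), r ∈ (0,1), 0 < |α| < r^{1−λ}, with t := |α|/r^{1−λ} ∈ (0,1), the derivative dI_a/dr has the same sign as λ²(t^{2+2/λ}−1) − 2(1−λ)(t^{2+2/λ}+1)log r − 2(1−λ)λ² t^{2+2/λ} log t divided by (λ log|α|), and this quantity is positive; hence I_a is strictly increasing on the region {(r,α) : 0 < |α| < r^{1−λ}, 0 < r < 1}. -/

import Mathlib

open Real

/-- Positivity of the derivative expression. -/
lemma Ia_deriv_pos_aux (lam A s : ℝ) (hlam0 : -1 ≤ lam) (hlam1 : lam < 0)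
    (hA : 0 < A) (hs0 : 0 < s) (hs1 : s < 1) (hAs : A < s ^ ((1 : ℝ) - lam)) :
    0 < (lam * A ^ 2) * ((2 * lam - 2) * s ^ (2 * lam - 2 - 1))
        + (1 / (2 * Real.log A)) *
          ( ( ((-(2 * A ^ (-(2:ℝ)/lam))) * ((2/lam - 2) * s ^ (2/lam - 2 - 1))) * Real.log s
              + ((-(2 * A ^ (-(2:ℝ)/lam))) * s ^ (2/lam - 2)) * s⁻¹
            + (lam * A ^ (-(2:ℝ)/lam)) * ((2/lam - 2) * s ^ (2/lam - 2 - 1))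
            + ( ((2 * lam ^ 2 * A ^ 2) * ((2 * lam - 2) * s ^ (2 * lam - 2 - 1))) * Real.log s
                + ((2 * lam ^ 2 * A ^ 2) * s ^ (2 * lam - 2)) * s⁻¹ )
            - (lam * A ^ 2) * ((2 * lam - 2) * s ^ (2 * lam - 2 - 1)) ) ) := by
  have hlamne : lam ≠ 0 := hlam1.ne
  have ep : s ^ (2 * lam - 2 - 1) = s ^ (2 * lam - 2) * s⁻¹ := by
    rw [Real.rpow_sub hs0, Real.rpow_one, div_eq_mul_inv]
  have eq' : s ^ (2/lam - 2 - 1) = s ^ (2/lam - 2) * s⁻¹ := by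
    rw [Real.rpow_sub hs0, Real.rpow_one, div_eq_mul_inv]
  rw [ep, eq']
  set p := s ^ (2 * lam - 2) with hpdef
  set q := s ^ (2/lam - 2) with hqdef
  set B := A ^ (-(2:ℝ)/lam) with hBdef
  set L := Real.log s with hLdef
  set M := Real.log A with hMdef
  have hp : 0 < p := Real.rpow_pos_of_pos hs0 _
  have hq : 0 < q := Real.rpow_pos_of_pos hs0 _
  have hB : 0 < B := Real.rpow_pos_of_pos hA _
  have hL : L < 0 := Real.log_neg hs0 hs1
  have hA1 : A < 1 := hAs.trans_le (Real.rpow_le_one hs0.le hs1.le (by linarith))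
  have hM : M < 0 := Real.log_neg hA hA1
  have hML : M + lam * L < 0 := by
    have h1 : M < Real.log (s ^ ((1:ℝ) - lam)) := Real.log_lt_log hA hAs
    rw [Real.log_rpow hs0] at h1
    nlinarith
  -- the key comparison  B*q ≤ A^2*p
  have hexp : 2 + 2/lam ≤ 0 := by
    have h2 : (2:ℝ)/lam ≤ -2 := by
      rw [div_le_iff_of_neg hlam1]; nlinarith
    linarith
  have key : s ^ (2/lam - 2*lam) ≤ A ^ ((2:ℝ) + 2/lam) := by
    have h1 : (s ^ ((1:ℝ) - lam)) ^ ((2:ℝ) + 2/lam) ≤ A ^ ((2:ℝ) + 2/lam) :=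
      Real.rpow_le_rpow_of_nonpos hA hAs.le hexp
    rwa [← Real.rpow_mul hs0.le, show ((1:ℝ) - lam) * (2 + 2/lam) = 2/lam - 2*lam by
      field_simp; ring] at h1
  have hPQ : B * q ≤ A ^ 2 * p := by
    have hq2 : q = s ^ (2/lam - 2*lam) * p := by
      rw [hpdef, hqdef, ← Real.rpow_add hs0]; ring_nf
    have hAB : B * A ^ ((2:ℝ) + 2/lam) = A ^ 2 := by
      rw [hBdef, ← Real.rpow_add hA, show (-(2:ℝ)/lam + (2 + 2/lam)) = ((2:ℕ):ℝ) by
        push_cast; field_simp; ring, Real.rpow_natCast]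
    calc B * q = B * s ^ (2/lam - 2*lam) * p := by rw [hq2]; ring
      _ ≤ B * A ^ ((2:ℝ) + 2/lam) * p :=
          mul_le_mul_of_nonneg_right (mul_le_mul_of_nonneg_left key hB.le) hp.le
      _ = A ^ 2 * p := by rw [hAB]
  have hA2 : (0:ℝ) < A ^ 2 := by positivity
  have hMs : 0 < lam * M * s := by
    have : 0 < lam * M := mul_pos_of_neg_of_neg hlam1 hM
    positivity
  have hE : 0 < lam ^ 2 * (A ^ 2 * p - B * q) + 2 * (1 - lam) * (B * q) * (-L)
      + 2 * lam ^ 2 * (1 - lam) * (A ^ 2 * p) * (-(M + lam * L)) := by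
    have t1 : 0 ≤ lam ^ 2 * (A ^ 2 * p - B * q) :=
      mul_nonneg (sq_nonneg lam) (by linarith)
    have t2 : 0 < 2 * (1 - lam) * (B * q) * (-L) := by
      apply mul_pos (mul_pos (by linarith) (by positivity)) (by linarith)
    have t3 : 0 < 2 * lam ^ 2 * (1 - lam) * (A ^ 2 * p) * (-(M + lam * L)) := by
      apply mul_pos (mul_pos (mul_pos (by positivity) (by linarith)) (by positivity))
        (by linarith)
    linarith
  have hident : (lam * A ^ 2) * ((2 * lam - 2) * (p * s⁻¹))
        + (1 / (2 * M)) *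
          ( ( ((-(2 * B)) * ((2/lam - 2) * (q * s⁻¹))) * L
              + ((-(2 * B)) * q) * s⁻¹
            + (lam * B) * ((2/lam - 2) * (q * s⁻¹))
            + ( ((2 * lam ^ 2 * A ^ 2) * ((2 * lam - 2) * (p * s⁻¹))) * L
                + ((2 * lam ^ 2 * A ^ 2) * p) * s⁻¹ )
            - (lam * A ^ 2) * ((2 * lam - 2) * (p * s⁻¹)) ) )
      = (lam ^ 2 * (A ^ 2 * p - B * q) + 2 * (1 - lam) * (B * q) * (-L)
        + 2 * lam ^ 2 * (1 - lam) * (A ^ 2 * p) * (-(M + lam * L))) / (lam * M * s) := by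
    have hsne : s ≠ 0 := hs0.ne'
    have hMne : M ≠ 0 := hM.ne
    field_simp
    ring
  calc (0:ℝ) < (lam ^ 2 * (A ^ 2 * p - B * q) + 2 * (1 - lam) * (B * q) * (-L)
        + 2 * lam ^ 2 * (1 - lam) * (A ^ 2 * p) * (-(M + lam * L))) / (lam * M * s) :=
        div_pos hE hMs
    _ = _ := by rw [← hident]

/-- The closed form `I_a` has the stated derivative at every `s > 0`. -/
lemma Ia_hasDerivAt (lam A : ℝ) (s : ℝ) (hs : 0 < s) :
    HasDerivAt (fun s : ℝ =>
      1 + lam * A ^ 2 * s ^ (2 * lam - 2)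
        + (1 / (2 * Real.log A)) *
            (-2 * A ^ (-(2 : ℝ) / lam) * s ^ (2 / lam - 2) * Real.log s
              + lam * A ^ (-(2 : ℝ) / lam) * s ^ (2 / lam - 2)
              + 2 * lam ^ 2 * A ^ 2 * s ^ (2 * lam - 2) * Real.log s
              - lam * A ^ 2 * s ^ (2 * lam - 2)))
      ((lam * A ^ 2) * ((2 * lam - 2) * s ^ (2 * lam - 2 - 1))
        + (1 / (2 * Real.log A)) *
          ( ( ((-(2 * A ^ (-(2:ℝ)/lam))) * ((2/lam - 2) * s ^ (2/lam - 2 - 1))) * Real.log s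
              + ((-(2 * A ^ (-(2:ℝ)/lam))) * s ^ (2/lam - 2)) * s⁻¹
            + (lam * A ^ (-(2:ℝ)/lam)) * ((2/lam - 2) * s ^ (2/lam - 2 - 1))
            + ( ((2 * lam ^ 2 * A ^ 2) * ((2 * lam - 2) * s ^ (2 * lam - 2 - 1))) * Real.log s
                + ((2 * lam ^ 2 * A ^ 2) * s ^ (2 * lam - 2)) * s⁻¹ )
            - (lam * A ^ 2) * ((2 * lam - 2) * s ^ (2 * lam - 2 - 1)) ) )) s := by
  have hc : HasDerivAt (fun x : ℝ => x ^ (2 * lam - 2))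
      ((2 * lam - 2) * s ^ (2 * lam - 2 - 1)) s :=
    Real.hasDerivAt_rpow_const (Or.inl hs.ne')
  have hd : HasDerivAt (fun x : ℝ => x ^ (2 / lam - 2))
      ((2 / lam - 2) * s ^ (2 / lam - 2 - 1)) s :=
    Real.hasDerivAt_rpow_const (Or.inl hs.ne')
  have hlog : HasDerivAt Real.log s⁻¹ s := Real.hasDerivAt_log hs.ne'
  have h1 : HasDerivAt (fun x : ℝ => lam * A ^ 2 * x ^ (2 * lam - 2))
      ((lam * A ^ 2) * ((2 * lam - 2) * s ^ (2 * lam - 2 - 1))) s := hc.const_mul _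
  have h2a : HasDerivAt (fun x : ℝ => -(2 * A ^ (-(2:ℝ)/lam)) * x ^ (2/lam - 2) * Real.log x)
      (((-(2 * A ^ (-(2:ℝ)/lam))) * ((2/lam - 2) * s ^ (2/lam - 2 - 1))) * Real.log s
        + ((-(2 * A ^ (-(2:ℝ)/lam))) * s ^ (2/lam - 2)) * s⁻¹) s :=
    (hd.const_mul _).mul hlog
  have h2b : HasDerivAt (fun x : ℝ => lam * A ^ (-(2:ℝ)/lam) * x ^ (2/lam - 2))
      ((lam * A ^ (-(2:ℝ)/lam)) * ((2/lam - 2) * s ^ (2/lam - 2 - 1))) s := hd.const_mul _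
  have h2c : HasDerivAt (fun x : ℝ => 2 * lam ^ 2 * A ^ 2 * x ^ (2 * lam - 2) * Real.log x)
      (((2 * lam ^ 2 * A ^ 2) * ((2 * lam - 2) * s ^ (2 * lam - 2 - 1))) * Real.log s
        + ((2 * lam ^ 2 * A ^ 2) * s ^ (2 * lam - 2)) * s⁻¹) s :=
    (hc.const_mul _).mul hlog
  have h2d : HasDerivAt (fun x : ℝ => lam * A ^ 2 * x ^ (2 * lam - 2))
      ((lam * A ^ 2) * ((2 * lam - 2) * s ^ (2 * lam - 2 - 1))) s := hc.const_mul _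
  have h2 := ((((h2a.add h2b).add h2c).sub h2d).const_mul (1 / (2 * Real.log A)))
  have h0 : HasDerivAt (fun x : ℝ => 1 + lam * A ^ 2 * x ^ (2 * lam - 2))
      ((lam * A ^ 2) * ((2 * lam - 2) * s ^ (2 * lam - 2 - 1))) s := by
    simpa using h1
  have := h0.add h2
  exact (this.congr_deriv (by ring)).congr_of_eventuallyEq
    (Filter.Eventually.of_forall fun x => by simp only [Pi.add_apply, Pi.sub_apply]; ring)

/-- For `λ ∈ [−1,0)`: with `t := |α|/r^{1−λ}`, the quantity
`(λ²(t^{2+2/λ}−1) − 2(1−λ)(t^{2+2/λ}+1)log r − 2(1−λ)λ² t^{2+2/λ} log t)/(λ log|α|)`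
(which has the sign of `dI_a/dr`) is positive; hence the closed-form `I_a` is strictly
increasing in `r` on the region `0 < |α| < r^{1−λ}`, `0 < r < 1`. -/
theorem Ia_strict_mono
    (lam : ℝ) (hlam0 : -1 ≤ lam) (hlam1 : lam < 0)
    (α : ℂ) (hα0 : 0 < ‖α‖) :
    let A : ℝ := ‖α‖
    let Ia : ℝ → ℝ := fun s =>
      1 + lam * A ^ 2 * s ^ (2 * lam - 2)
        + (1 / (2 * Real.log A)) *
            (-2 * A ^ (-(2 : ℝ) / lam) * s ^ (2 / lam - 2) * Real.log s
              + lam * A ^ (-(2 : ℝ) / lam) * s ^ (2 / lam - 2)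
              + 2 * lam ^ 2 * A ^ 2 * s ^ (2 * lam - 2) * Real.log s
              - lam * A ^ 2 * s ^ (2 * lam - 2))
    (∀ r : ℝ, 0 < r → r < 1 → A < r ^ ((1 : ℝ) - lam) →
      let t : ℝ := A / r ^ ((1 : ℝ) - lam)
      0 < (lam ^ 2 * (t ^ (2 + 2 / lam) - 1)
            - 2 * (1 - lam) * (t ^ (2 + 2 / lam) + 1) * Real.log r
            - 2 * (1 - lam) * lam ^ 2 * t ^ (2 + 2 / lam) * Real.log t)
          / (lam * Real.log A)) ∧
    (∀ r₁ r₂ : ℝ, 0 < r₁ → r₁ < r₂ → r₂ < 1 → A < r₁ ^ ((1 : ℝ) - lam) →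
      Ia r₁ < Ia r₂) := by
  intro A Ia
  have hA : 0 < A := hα0
  constructor
  · -- Part 1: the sign quantity is positive
    intro r hr0 hr1 hAr t
    have hrp : 0 < r ^ ((1:ℝ) - lam) := Real.rpow_pos_of_pos hr0 _
    have hr1' : r ^ ((1:ℝ) - lam) < 1 := Real.rpow_lt_one hr0.le hr1 (by linarith)
    have ht0 : 0 < t := div_pos hA hrp
    have ht1 : t < 1 := (div_lt_one hrp).mpr hAr
    have hexp : 2 + 2/lam ≤ 0 := by
      have h2 : (2:ℝ)/lam ≤ -2 := by
        rw [div_le_iff_of_neg hlam1]; nlinarith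
      linarith
    have hT : 1 ≤ t ^ (2 + 2/lam) :=
      Real.one_le_rpow_of_pos_of_le_one_of_nonpos ht0 ht1.le hexp
    have hT0 : 0 < t ^ (2 + 2/lam) := Real.rpow_pos_of_pos ht0 _
    have hlr : Real.log r < 0 := Real.log_neg hr0 hr1
    have hlt : Real.log t < 0 := Real.log_neg ht0 ht1
    have hA1 : A < 1 := hAr.trans hr1'
    have hM : Real.log A < 0 := Real.log_neg hA hA1
    have hden : 0 < lam * Real.log A := mul_pos_of_neg_of_neg hlam1 hM
    apply div_pos _ hden
    have t1 : 0 ≤ lam ^ 2 * (t ^ (2 + 2/lam) - 1) :=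
      mul_nonneg (sq_nonneg lam) (by linarith)
    have t2 : 0 < 2 * (1 - lam) * (t ^ (2 + 2/lam) + 1) * (-Real.log r) := by
      apply mul_pos (mul_pos (mul_pos (by norm_num) (by linarith)) (by linarith)) (by linarith)
    have t3 : 0 ≤ 2 * (1 - lam) * lam ^ 2 * t ^ (2 + 2/lam) * (-Real.log t) := by
      apply mul_nonneg (mul_nonneg (mul_nonneg (mul_nonneg (by norm_num) (by linarith))
        (sq_nonneg lam)) hT0.le) (by linarith)
    nlinarith
  · -- Part 2: strict monotonicity
    intro r₁ r₂ hr₁ hr12 hr₂ hAr₁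
    have hmono : StrictMonoOn Ia (Set.Icc r₁ r₂) := by
      apply strictMonoOn_of_deriv_pos (convex_Icc r₁ r₂)
      · intro x hx
        exact (Ia_hasDerivAt lam A x (lt_of_lt_of_le hr₁ hx.1)).continuousAt.continuousWithinAt
      · intro x hx
        rw [interior_Icc] at hx
        have hx0 : 0 < x := hr₁.trans hx.1
        have hx1 : x < 1 := hx.2.trans hr₂
        have hAx : A < x ^ ((1:ℝ) - lam) := by
          refine hAr₁.trans_le ?_
          exact Real.rpow_le_rpow hr₁.le hx.1.le (by linarith)
        rw [(Ia_hasDerivAt lam A x hx0).deriv]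
        exact Ia_deriv_pos_aux lam A x hlam0 hlam1 hA hx0 hx1 hAx
    exact hmono (Set.left_mem_Icc.mpr hr12.le) (Set.right_mem_Icc.mpr hr12.le) hr12
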